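/- Let μ ∈ (−1, 1), μ ≠ 0, and set Φ(r) = Σ_{k≥0} (r²/4)^k / (((μ+2)/2)_k ((μ+3)/2)_k) (so Φ(r) = φ_0(i r) > 0 for r > 0). Then the function r ↦ (μ + 1/2) + r·Φ'(r)/Φ(r), which equals i r·s_{μ−1/2,1/2}'(i r)/s_{μ−1/2,1/2}(i r), is increasing on (0, ∞) and tends to μ + 1/2 as r → 0⁺. Consequently, for μ ∈ (−1, −1/2) and α ∈ [0, 1), the equation (μ + 1/2) + r·Φ'(r)/Φ(r) = α(μ + 1/2) has exactly one root in (0, ∞). -/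

import Mathlib

open scoped BigOperators

/-- The Pochhammer symbol `(a)_k = a (a+1) ⋯ (a+k-1)`. -/
noncomputable def poch (a : ℝ) (k : ℕ) : ℝ := ∏ i ∈ Finset.range k, (a + i)

/-- `Φ(r) = φ₀(i r) = Σ_{k≥0} (r²/4)^k / (((μ+2)/2)_k ((μ+3)/2)_k)`. -/
noncomputable def PhiR (μ : ℝ) (x : ℝ) : ℝ :=
  ∑' k : ℕ, (x ^ 2 / 4) ^ k / (poch ((μ + 2) / 2) k * poch ((μ + 3) / 2) k)

namespace S13

noncomputable def cc (a b : ℝ) (k : ℕ) : ℝ := (poch a k * poch b k)⁻¹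

lemma poch_pos {a : ℝ} (ha : 0 < a) (k : ℕ) : 0 < poch a k :=
  Finset.prod_pos fun i _ => by positivity

lemma poch_succ (a : ℝ) (k : ℕ) : poch a (k + 1) = poch a k * (a + k) :=
  Finset.prod_range_succ _ _

lemma cc_pos {a b : ℝ} (ha : 0 < a) (hb : 0 < b) (k : ℕ) : 0 < cc a b k :=
  inv_pos.mpr (mul_pos (poch_pos ha k) (poch_pos hb k))

lemma cc_zero (a b : ℝ) : cc a b 0 = 1 := by simp [cc, poch]

lemma cc_succ {a b : ℝ} (k : ℕ) :
    cc a b (k + 1) = cc a b k * ((a + k) * (b + k))⁻¹ := by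
  unfold cc
  rw [poch_succ, poch_succ,
    show poch a k * (a + k) * (poch b k * (b + k))
      = poch a k * poch b k * ((a + k) * (b + k)) by ring, mul_inv]

variable {a b : ℝ}

lemma summable_main (ha : 0 < a) (hb : 0 < b) {t : ℝ} (ht : 0 ≤ t) :
    Summable fun k : ℕ => ((k : ℝ) + 1) * cc a b k * t ^ k := by
  apply summable_of_ratio_norm_eventually_le (r := 1 / 2) (by norm_num)
  filter_upwards [Filter.eventually_ge_atTop (max 1 ⌈6 * t⌉₊)] with k hk
  have hk1 : 1 ≤ (k : ℝ) := by exact_mod_cast le_trans (le_max_left _ _) hk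
  have hk6 : 6 * t ≤ (k : ℝ) :=
    le_trans (Nat.le_ceil _) (by exact_mod_cast le_trans (le_max_right _ _) hk)
  have hck := (cc_pos ha hb k).le
  have hnn1 : 0 ≤ ((k : ℝ) + 1) * cc a b k * t ^ k :=
    mul_nonneg (mul_nonneg (by positivity) hck) (pow_nonneg ht k)
  have hnn2 : 0 ≤ ((k + 1 : ℕ) + 1 : ℝ) * cc a b (k + 1) * t ^ (k + 1) :=
    mul_nonneg (mul_nonneg (by positivity) (cc_pos ha hb (k + 1)).le) (pow_nonneg ht _)
  rw [Real.norm_of_nonneg hnn2, Real.norm_of_nonneg hnn1, cc_succ, pow_succ]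
  have habpos : 0 < (a + (k : ℝ)) * (b + k) := by positivity
  have key : ((k : ℝ) + 2) * t * ((a + k) * (b + k))⁻¹ ≤ 1 / 2 * ((k : ℝ) + 1) := by
    rw [← div_eq_mul_inv, div_le_iff₀ habpos]
    nlinarith [hk1, hk6, ht, ha, hb, sq_nonneg ((k : ℝ) - 1)]
  have h2 := mul_le_mul_of_nonneg_right key
    (mul_nonneg hck (pow_nonneg ht k))
  calc ((k + 1 : ℕ) + 1 : ℝ) * (cc a b k * ((a + k) * (b + k))⁻¹) * (t ^ k * t)
      = ((k : ℝ) + 2) * t * ((a + k) * (b + k))⁻¹ * (cc a b k * t ^ k) := by push_cast; ring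
    _ ≤ 1 / 2 * ((k : ℝ) + 1) * (cc a b k * t ^ k) := h2
    _ = 1 / 2 * (((k : ℝ) + 1) * cc a b k * t ^ k) := by ring

lemma summable_c (ha : 0 < a) (hb : 0 < b) {t : ℝ} (ht : 0 ≤ t) :
    Summable fun k : ℕ => cc a b k * t ^ k := by
  apply (summable_main ha hb ht).of_nonneg_of_le
    (fun k => mul_nonneg (cc_pos ha hb k).le (pow_nonneg ht k))
  intro k
  have hck := (cc_pos ha hb k).le
  have : (1 : ℝ) ≤ (k : ℝ) + 1 := by have : (0:ℝ) ≤ (k:ℝ) := Nat.cast_nonneg k; linarith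
  nlinarith [mul_nonneg hck (pow_nonneg ht k)]

lemma summable_kc (ha : 0 < a) (hb : 0 < b) {t : ℝ} (ht : 0 ≤ t) :
    Summable fun k : ℕ => (k : ℝ) * cc a b k * t ^ k := by
  apply (summable_main ha hb ht).of_nonneg_of_le
    (fun k => mul_nonneg (mul_nonneg (by positivity) (cc_pos ha hb k).le) (pow_nonneg ht k))
  intro k
  have hck := (cc_pos ha hb k).le
  have h1 : (k : ℝ) ≤ (k : ℝ) + 1 := by linarith
  nlinarith [mul_nonneg hck (pow_nonneg ht k)]


noncomputable def gg (a b t : ℝ) : ℝ := ∑' k : ℕ, cc a b k * t ^ k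

noncomputable def NN (a b t : ℝ) : ℝ := ∑' k : ℕ, (k : ℝ) * cc a b k * t ^ k

lemma summable_u (ha : 0 < a) (hb : 0 < b) {R : ℝ} (hR : 0 < R) :
    Summable fun k : ℕ => (k : ℝ) * cc a b k * (R ^ 2 / 4) ^ (k - 1) * (R / 2) := by
  rw [← summable_nat_add_iff 1]
  have ht : (0 : ℝ) ≤ R ^ 2 / 4 := by positivity
  refine Summable.of_nonneg_of_le (fun k => ?_) (fun k => ?_)
    ((summable_main ha hb ht).mul_right ((a * b)⁻¹ * (R / 2)))
  · exact mul_nonneg (mul_nonneg (mul_nonneg (Nat.cast_nonneg _) (cc_pos ha hb _).le)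
      (pow_nonneg ht _)) (by positivity)
  simp only [Nat.add_sub_cancel]
  have h1 : cc a b (k + 1) ≤ cc a b k * (a * b)⁻¹ := by
    rw [cc_succ]
    refine mul_le_mul_of_nonneg_left ?_ (cc_pos ha hb k).le
    refine inv_anti₀ (by positivity) ?_
    have h0 : (0:ℝ) ≤ (k:ℝ) := Nat.cast_nonneg k
    nlinarith
  have hfac : (0 : ℝ) ≤ ((k : ℝ) + 1) * (R ^ 2 / 4) ^ k * (R / 2) := by
    have h0 : (0:ℝ) ≤ (k:ℝ) := Nat.cast_nonneg k
    positivity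
  calc ((k + 1 : ℕ) : ℝ) * cc a b (k + 1) * (R ^ 2 / 4) ^ k * (R / 2)
      = cc a b (k + 1) * (((k : ℝ) + 1) * (R ^ 2 / 4) ^ k * (R / 2)) := by push_cast; ring
    _ ≤ cc a b k * (a * b)⁻¹ * (((k : ℝ) + 1) * (R ^ 2 / 4) ^ k * (R / 2)) :=
        mul_le_mul_of_nonneg_right h1 hfac
    _ = ((k : ℝ) + 1) * cc a b k * (R ^ 2 / 4) ^ k * ((a * b)⁻¹ * (R / 2)) := by ring

lemma hasDerivAt_phi (ha : 0 < a) (hb : 0 < b) (r : ℝ) :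
    HasDerivAt (fun x : ℝ => ∑' k : ℕ, cc a b k * (x ^ 2 / 4) ^ k)
      (∑' k : ℕ, (k : ℝ) * cc a b k * (r ^ 2 / 4) ^ (k - 1) * (r / 2)) r := by
  have hR0 : (0 : ℝ) < |r| + 1 := by positivity
  apply hasDerivAt_tsum_of_isPreconnected (summable_u ha hb hR0)
    Metric.isOpen_ball (convex_ball (0 : ℝ) (|r| + 1)).isPreconnected
    (g' := fun (k : ℕ) (y : ℝ) => (k : ℝ) * cc a b k * (y ^ 2 / 4) ^ (k - 1) * (y / 2))
  · intro k y _
    have h1 : HasDerivAt (fun x : ℝ => x ^ 2 / 4) (y / 2) y := by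
      have h := (hasDerivAt_pow 2 y).div_const 4
      exact h.congr_deriv (by rw [show (2:ℕ) - 1 = 1 from rfl]; push_cast; ring)
    have h2 := (h1.pow k).const_mul (cc a b k)
    exact h2.congr_deriv (by ring)
  · intro k y hy
    have hyR : |y| ≤ |r| + 1 := by
      have := Metric.mem_ball.mp hy
      rw [Real.dist_eq, sub_zero] at this
      exact this.le
    have h0 : (0:ℝ) ≤ (k:ℝ) := Nat.cast_nonneg k
    have h1 : (0 : ℝ) ≤ y ^ 2 / 4 := by positivity
    have hck := (cc_pos ha hb k).le
    have e : ‖(k : ℝ) * cc a b k * (y ^ 2 / 4) ^ (k - 1) * (y / 2)‖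
        = (k : ℝ) * cc a b k * (y ^ 2 / 4) ^ (k - 1) * (|y| / 2) := by
      rw [Real.norm_eq_abs, abs_mul,
        abs_of_nonneg (mul_nonneg (mul_nonneg h0 hck) (pow_nonneg h1 _)), abs_div]
      norm_num
    rw [e]
    have hy2 : y ^ 2 ≤ (|r| + 1) ^ 2 := by
      nlinarith [sq_abs y, abs_nonneg y]
    have hp : (y ^ 2 / 4) ^ (k - 1) ≤ ((|r| + 1) ^ 2 / 4) ^ (k - 1) := by
      apply pow_le_pow_left₀ h1
      linarith
    have base_nn : (0:ℝ) ≤ ((|r| + 1) ^ 2 / 4) ^ (k - 1) := pow_nonneg (by positivity) _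
    calc (k : ℝ) * cc a b k * (y ^ 2 / 4) ^ (k - 1) * (|y| / 2)
        ≤ (k : ℝ) * cc a b k * ((|r| + 1) ^ 2 / 4) ^ (k - 1) * (|y| / 2) :=
          mul_le_mul_of_nonneg_right (mul_le_mul_of_nonneg_left hp (mul_nonneg h0 hck))
            (by positivity)
      _ ≤ (k : ℝ) * cc a b k * ((|r| + 1) ^ 2 / 4) ^ (k - 1) * ((|r| + 1) / 2) :=
          mul_le_mul_of_nonneg_left (by linarith) (mul_nonneg (mul_nonneg h0 hck) base_nn)
  · exact Metric.mem_ball_self hR0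
  · have h0 : ((0 : ℝ) ^ 2 / 4) = 0 := by norm_num
    simp only [h0]
    exact summable_c ha hb le_rfl
  · rw [Metric.mem_ball, Real.dist_eq, sub_zero]
    linarith [abs_nonneg r]


lemma cont_aux (d : ℕ → ℝ) (hd : ∀ k, 0 ≤ d k)
    (h : ∀ R : ℝ, 0 < R → Summable fun k => d k * R ^ k) :
    Continuous fun t : ℝ => ∑' k : ℕ, d k * t ^ k := by
  rw [continuous_iff_continuousAt]
  intro t0
  have hR0 : (0 : ℝ) < |t0| + 1 := by positivity
  have hc : ContinuousOn (fun t : ℝ => ∑' k : ℕ, d k * t ^ k)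
      (Metric.ball 0 (|t0| + 1)) := by
    apply continuousOn_tsum
      (fun k => (continuous_const.mul (continuous_pow k)).continuousOn) (h _ hR0)
    intro k x hx
    rw [Metric.mem_ball, Real.dist_eq, sub_zero] at hx
    simp only [Pi.mul_apply]
    rw [Real.norm_eq_abs, abs_mul, abs_of_nonneg (hd k), abs_pow]
    exact mul_le_mul_of_nonneg_left (pow_le_pow_left₀ (abs_nonneg x) hx.le k) (hd k)
  exact hc.continuousAt (Metric.isOpen_ball.mem_nhds (by
    rw [Metric.mem_ball, Real.dist_eq, sub_zero]; linarith))

lemma continuous_gg (ha : 0 < a) (hb : 0 < b) : Continuous (gg a b) :=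
  cont_aux _ (fun k => (cc_pos ha hb k).le) (fun R hR => summable_c ha hb hR.le)

lemma continuous_NN (ha : 0 < a) (hb : 0 < b) : Continuous (NN a b) :=
  cont_aux _ (fun k => mul_nonneg (Nat.cast_nonneg _) (cc_pos ha hb k).le)
    (fun R hR => (summable_kc ha hb hR.le).congr (fun k => by ring))

lemma one_le_gg (ha : 0 < a) (hb : 0 < b) {t : ℝ} (ht : 0 ≤ t) : 1 ≤ gg a b t := by
  have h0 : cc a b 0 * t ^ 0 = 1 := by simp [cc_zero]
  calc (1 : ℝ) = cc a b 0 * t ^ 0 := h0.symm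
    _ ≤ gg a b t := Summable.le_tsum (summable_c ha hb ht) 0
        (fun j _ => mul_nonneg (cc_pos ha hb j).le (pow_nonneg ht j))

lemma gg_pos (ha : 0 < a) (hb : 0 < b) {t : ℝ} (ht : 0 ≤ t) : 0 < gg a b t :=
  lt_of_lt_of_le one_pos (one_le_gg ha hb ht)

lemma NN_nonneg (ha : 0 < a) (hb : 0 < b) {t : ℝ} (ht : 0 ≤ t) : 0 ≤ NN a b t :=
  tsum_nonneg fun k => mul_nonneg
    (mul_nonneg (Nat.cast_nonneg _) (cc_pos ha hb k).le) (pow_nonneg ht k)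

lemma NN_zero : NN a b 0 = 0 := by
  have h : ∀ k : ℕ, (k : ℝ) * cc a b k * (0 : ℝ) ^ k = 0 := by
    intro k
    cases k with
    | zero => simp
    | succ m => simp [zero_pow]
  calc NN a b 0 = ∑' k : ℕ, (0 : ℝ) := tsum_congr h
    _ = 0 := tsum_zero

lemma gg_lower (ha : 0 < a) (hb : 0 < b) {t : ℝ} (ht : 0 ≤ t) :
    1 + cc a b 1 * t ≤ gg a b t := by
  have h := Summable.sum_le_tsum (Finset.range 2)
    (fun i _ => mul_nonneg (cc_pos ha hb i).le (pow_nonneg ht i))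
    (summable_c ha hb ht)
  have e : ∑ i ∈ Finset.range 2, cc a b i * t ^ i = 1 + cc a b 1 * t := by
    rw [Finset.sum_range_succ, Finset.sum_range_one, cc_zero]
    ring
  rw [e] at h
  exact h

lemma NN_ge (ha : 0 < a) (hb : 0 < b) {t : ℝ} (ht : 0 ≤ t) :
    gg a b t - 1 ≤ NN a b t := by
  have hS1 := summable_kc ha hb ht
  have hS2 := summable_c ha hb ht
  have hsub : Summable fun k : ℕ => (k : ℝ) * cc a b k * t ^ k - cc a b k * t ^ k :=
    hS1.sub hS2
  have e1 : NN a b t - gg a b t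
      = ∑' k : ℕ, ((k : ℝ) * cc a b k * t ^ k - cc a b k * t ^ k) :=
    (Summable.tsum_sub hS1 hS2).symm
  rw [Summable.tsum_eq_zero_add hsub] at e1
  have e2 : ((0 : ℕ) : ℝ) * cc a b 0 * t ^ 0 - cc a b 0 * t ^ 0 = -1 := by
    simp [cc_zero]
  have e3 : 0 ≤ ∑' k : ℕ,
      (((k + 1 : ℕ) : ℝ) * cc a b (k + 1) * t ^ (k + 1) - cc a b (k + 1) * t ^ (k + 1)) := by
    apply tsum_nonneg
    intro k
    have hc := (cc_pos ha hb (k + 1)).le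
    have hp : (0 : ℝ) ≤ cc a b (k + 1) * t ^ (k + 1) := mul_nonneg hc (pow_nonneg ht _)
    have h1 : (1 : ℝ) ≤ ((k + 1 : ℕ) : ℝ) := by
      push_cast
      have : (0:ℝ) ≤ (k:ℝ) := Nat.cast_nonneg k
      linarith
    nlinarith
  rw [e2] at e1
  linarith


lemma key_nonneg {t s : ℝ} (ht : 0 ≤ t) (hts : t ≤ s) (k j : ℕ) :
    0 ≤ ((k : ℝ) - (j : ℝ)) * (s ^ k * t ^ j - s ^ j * t ^ k) := by
  have hs : 0 ≤ s := ht.trans hts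
  rcases le_total j k with h | h
  · obtain ⟨m, rfl⟩ := Nat.exists_eq_add_of_le h
    have h1 : s ^ (j + m) * t ^ j - s ^ j * t ^ (j + m)
        = s ^ j * t ^ j * (s ^ m - t ^ m) := by
      rw [pow_add, pow_add]; ring
    have h2 : t ^ m ≤ s ^ m := pow_le_pow_left₀ ht hts m
    have h3 : (((j + m : ℕ)) : ℝ) - (j : ℝ) = (m : ℝ) := by push_cast; ring
    rw [h1, h3]
    exact mul_nonneg (Nat.cast_nonneg m)
      (mul_nonneg (mul_nonneg (pow_nonneg hs j) (pow_nonneg ht j)) (sub_nonneg.mpr h2))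
  · obtain ⟨m, rfl⟩ := Nat.exists_eq_add_of_le h
    have h1 : s ^ k * t ^ (k + m) - s ^ (k + m) * t ^ k
        = -(s ^ k * t ^ k * (s ^ m - t ^ m)) := by
      rw [pow_add, pow_add]; ring
    have h2 : t ^ m ≤ s ^ m := pow_le_pow_left₀ ht hts m
    have h3 : ((k : ℕ) : ℝ) - (((k + m : ℕ)) : ℝ) = -(m : ℝ) := by push_cast; ring
    rw [h1, h3, neg_mul_neg]
    exact mul_nonneg (Nat.cast_nonneg m)
      (mul_nonneg (mul_nonneg (pow_nonneg hs k) (pow_nonneg ht k)) (sub_nonneg.mpr h2))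

lemma nonneg_norm_summable {f : ℕ → ℝ} (hnn : ∀ k, 0 ≤ f k) (hf : Summable f) :
    Summable fun k => ‖f k‖ :=
  hf.congr fun k => (Real.norm_of_nonneg (hnn k)).symm

set_option maxHeartbeats 2000000 in
lemma core (ha : 0 < a) (hb : 0 < b) {t s : ℝ} (ht : 0 < t) (hts : t < s) :
    NN a b t * gg a b s < NN a b s * gg a b t := by
  have hs : 0 < s := ht.trans hts
  have Skt := summable_kc ha hb ht.le
  have Sks := summable_kc ha hb hs.le
  have Sct := summable_c ha hb ht.le
  have Scs := summable_c ha hb hs.le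
  have hkc_nn : ∀ (u : ℝ), 0 ≤ u → ∀ k : ℕ, 0 ≤ (k : ℝ) * cc a b k * u ^ k :=
    fun u hu k => mul_nonneg (mul_nonneg (Nat.cast_nonneg _) (cc_pos ha hb k).le)
      (pow_nonneg hu k)
  have hc_nn : ∀ (u : ℝ), 0 ≤ u → ∀ k : ℕ, 0 ≤ cc a b k * u ^ k :=
    fun u hu k => mul_nonneg (cc_pos ha hb k).le (pow_nonneg hu k)
  -- product summabilities
  have SA : Summable (fun p : ℕ × ℕ =>
      ((p.1 : ℝ) * cc a b p.1 * s ^ p.1) * (cc a b p.2 * t ^ p.2)) :=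
    Sks.mul_of_nonneg Sct (fun k => hkc_nn s hs.le k) (fun k => hc_nn t ht.le k)
  have SB : Summable (fun p : ℕ × ℕ =>
      ((p.1 : ℝ) * cc a b p.1 * t ^ p.1) * (cc a b p.2 * s ^ p.2)) :=
    Skt.mul_of_nonneg Scs (fun k => hkc_nn t ht.le k) (fun k => hc_nn s hs.le k)
  have SB' : Summable (fun p : ℕ × ℕ =>
      ((p.2 : ℝ) * cc a b p.2 * t ^ p.2) * (cc a b p.1 * s ^ p.1)) :=
    ((Equiv.prodComm ℕ ℕ).summable_iff).mpr SB
  -- express the two products as double sums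
  have hA : NN a b s * gg a b t = ∑' p : ℕ × ℕ,
      ((p.1 : ℝ) * cc a b p.1 * s ^ p.1) * (cc a b p.2 * t ^ p.2) :=
    tsum_mul_tsum_of_summable_norm
      (nonneg_norm_summable (hkc_nn s hs.le) Sks) (nonneg_norm_summable (hc_nn t ht.le) Sct)
  have hB : NN a b t * gg a b s = ∑' p : ℕ × ℕ,
      ((p.1 : ℝ) * cc a b p.1 * t ^ p.1) * (cc a b p.2 * s ^ p.2) :=
    tsum_mul_tsum_of_summable_norm
      (nonneg_norm_summable (hkc_nn t ht.le) Skt) (nonneg_norm_summable (hc_nn s hs.le) Scs)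
  have hB2 : (∑' p : ℕ × ℕ, ((p.2 : ℝ) * cc a b p.2 * t ^ p.2) * (cc a b p.1 * s ^ p.1))
      = ∑' p : ℕ × ℕ, ((p.1 : ℝ) * cc a b p.1 * t ^ p.1) * (cc a b p.2 * s ^ p.2) :=
    Equiv.tsum_eq (Equiv.prodComm ℕ ℕ)
      (fun p : ℕ × ℕ => ((p.1 : ℝ) * cc a b p.1 * t ^ p.1) * (cc a b p.2 * s ^ p.2))
  -- the difference
  set D : ℕ × ℕ → ℝ := fun p =>
    ((p.1 : ℝ) * cc a b p.1 * s ^ p.1) * (cc a b p.2 * t ^ p.2)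
      - ((p.2 : ℝ) * cc a b p.2 * t ^ p.2) * (cc a b p.1 * s ^ p.1) with hD
  have SD : Summable D := SA.sub SB'
  have SDswap : Summable (fun p : ℕ × ℕ => D (Equiv.prodComm ℕ ℕ p)) :=
    ((Equiv.prodComm ℕ ℕ).summable_iff).mpr SD
  have hDsum : ∑' p, D p = NN a b s * gg a b t - NN a b t * gg a b s := by
    rw [hA, hB, ← hB2]
    exact Summable.tsum_sub SA SB'
  have hswap_eq : (∑' p : ℕ × ℕ, D (Equiv.prodComm ℕ ℕ p)) = ∑' p, D p :=
    Equiv.tsum_eq (Equiv.prodComm ℕ ℕ) D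
  have hWpos : 0 < ∑' p : ℕ × ℕ, (D p + D (Equiv.prodComm ℕ ℕ p)) := by
    refine Summable.tsum_pos (SD.add SDswap) (fun p => ?_) (1, 0) ?_
    · obtain ⟨k, j⟩ := p
      have hkey := key_nonneg ht.le hts.le k j
      have hcc : 0 ≤ cc a b k * cc a b j :=
        mul_nonneg (cc_pos ha hb k).le (cc_pos ha hb j).le
      have e : D (k, j) + D (Equiv.prodComm ℕ ℕ (k, j))
          = cc a b k * cc a b j * (((k : ℝ) - (j : ℝ)) * (s ^ k * t ^ j - s ^ j * t ^ k)) := by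
        simp only [hD, Equiv.prodComm_apply, Prod.swap_prod_mk]
        ring
      rw [e]
      exact mul_nonneg hcc hkey
    · have e : D (1, 0) + D (Equiv.prodComm ℕ ℕ (1, 0))
          = cc a b 1 * cc a b 0 * (((1 : ℝ) - (0 : ℝ)) * (s ^ 1 * t ^ 0 - s ^ 0 * t ^ 1)) := by
        simp only [hD, Equiv.prodComm_apply, Prod.swap_prod_mk]
        push_cast
        ring
      rw [e, cc_zero]
      have := cc_pos ha hb 1
      nlinarith
  have h2 : ∑' p : ℕ × ℕ, (D p + D (Equiv.prodComm ℕ ℕ p)) = 2 * ∑' p, D p := by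
    rw [Summable.tsum_add SD SDswap, hswap_eq]
    ring
  rw [h2] at hWpos
  have : 0 < ∑' p, D p := by linarith
  linarith [hDsum ▸ this]


lemma r_mul (r : ℝ) :
    r * (∑' k : ℕ, (k : ℝ) * cc a b k * (r ^ 2 / 4) ^ (k - 1) * (r / 2))
      = 2 * NN a b (r ^ 2 / 4) := by
  rw [NN, ← tsum_mul_left, ← tsum_mul_left]
  apply tsum_congr
  intro k
  cases k with
  | zero => simp
  | succ m =>
    simp only [Nat.add_sub_cancel]
    push_cast
    ring

lemma phiR_eq (μ : ℝ) :
    PhiR μ = fun x : ℝ => ∑' k : ℕ, cc ((μ + 2) / 2) ((μ + 3) / 2) k * (x ^ 2 / 4) ^ k := by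
  funext x
  unfold PhiR
  apply tsum_congr
  intro k
  rw [cc, div_eq_mul_inv, mul_comm]

end S13

open S13 in
set_option maxHeartbeats 2000000 in
/-- For `μ ∈ (−1,1)`, `μ ≠ 0`, the function
`r ↦ (μ + 1/2) + r Φ'(r)/Φ(r)` is increasing on `(0, ∞)` and tends to `μ + 1/2` as
`r → 0⁺`. Consequently, for `μ ∈ (−1, −1/2)` and `α ∈ [0, 1)`, the equation
`(μ + 1/2) + r Φ'(r)/Φ(r) = α (μ + 1/2)` has exactly one root in `(0, ∞)`. -/
theorem Phi_logderiv_increasing (μ : ℝ) (hμ : μ ∈ Set.Ioo (-1 : ℝ) 1) (hμ0 : μ ≠ 0) :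
    StrictMonoOn (fun r : ℝ => (μ + 1 / 2) + r * deriv (PhiR μ) r / PhiR μ r)
      (Set.Ioi (0 : ℝ)) ∧
    Filter.Tendsto (fun r : ℝ => (μ + 1 / 2) + r * deriv (PhiR μ) r / PhiR μ r)
      (nhdsWithin 0 (Set.Ioi (0 : ℝ))) (nhds (μ + 1 / 2)) ∧
    (∀ α : ℝ, μ ∈ Set.Ioo (-1 : ℝ) (-(1 : ℝ) / 2) → α ∈ Set.Ico (0 : ℝ) 1 →
      ∃! r : ℝ, 0 < r ∧
        (μ + 1 / 2) + r * deriv (PhiR μ) r / PhiR μ r = α * (μ + 1 / 2)) := by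
  obtain ⟨hμ1, hμ2⟩ := hμ
  set a : ℝ := (μ + 2) / 2 with ha_def
  set b : ℝ := (μ + 3) / 2 with hb_def
  have ha : 0 < a := by rw [ha_def]; linarith
  have hb : 0 < b := by rw [hb_def]; linarith
  have hphi := phiR_eq μ
  rw [← ha_def, ← hb_def] at hphi
  have hderiv : ∀ r : ℝ, deriv (PhiR μ) r
      = ∑' k : ℕ, (k : ℝ) * cc a b k * (r ^ 2 / 4) ^ (k - 1) * (r / 2) := by
    intro r
    rw [hphi]
    exact (hasDerivAt_phi ha hb r).deriv
  have hval : ∀ x : ℝ, PhiR μ x = gg a b (x ^ 2 / 4) := by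
    intro x
    rw [hphi, gg]
  have ht_nn : ∀ r : ℝ, (0 : ℝ) ≤ r ^ 2 / 4 := fun r => by positivity
  have hfun : ∀ r : ℝ, (μ + 1 / 2) + r * deriv (PhiR μ) r / PhiR μ r
      = (μ + 1 / 2) + 2 * NN a b (r ^ 2 / 4) / gg a b (r ^ 2 / 4) := by
    intro r
    rw [hderiv r, hval r, r_mul r]
  have hfun' : (fun r : ℝ => (μ + 1 / 2) + r * deriv (PhiR μ) r / PhiR μ r)
      = fun r : ℝ => (μ + 1 / 2) + 2 * NN a b (r ^ 2 / 4) / gg a b (r ^ 2 / 4) :=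
    funext hfun
  set G : ℝ → ℝ := fun r => (μ + 1 / 2) + 2 * NN a b (r ^ 2 / 4) / gg a b (r ^ 2 / 4) with hG
  -- strict monotonicity
  have hmono : StrictMonoOn G (Set.Ioi (0 : ℝ)) := by
    intro r1 h1 r2 h2 h12
    simp only [Set.mem_Ioi] at h1 h2
    have ht1 : 0 < r1 ^ 2 / 4 := by positivity
    have ht12 : r1 ^ 2 / 4 < r2 ^ 2 / 4 := by nlinarith
    have hcore := core ha hb ht1 ht12
    have hg1 := gg_pos ha hb (ht_nn r1)
    have hg2 := gg_pos ha hb (ht_nn r2)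
    have hdiv : 2 * NN a b (r1 ^ 2 / 4) / gg a b (r1 ^ 2 / 4)
        < 2 * NN a b (r2 ^ 2 / 4) / gg a b (r2 ^ 2 / 4) := by
      rw [div_lt_div_iff₀ hg1 hg2]
      nlinarith
    simp only [hG]
    linarith
  -- continuity
  have hcont : Continuous G := by
    apply continuous_const.add
    apply Continuous.div
    · exact continuous_const.mul ((continuous_NN ha hb).comp
        ((continuous_pow 2).div_const 4))
    · exact (continuous_gg ha hb).comp ((continuous_pow 2).div_const 4)
    · intro r
      exact ne_of_gt (gg_pos ha hb (ht_nn r))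
  have hG0 : G 0 = μ + 1 / 2 := by
    simp only [hG]
    norm_num [NN_zero]
  have hlim : Filter.Tendsto G (nhdsWithin 0 (Set.Ioi (0 : ℝ))) (nhds (μ + 1 / 2)) := by
    have := (hcont.tendsto 0).mono_left (nhdsWithin_le_nhds (s := Set.Ioi (0:ℝ)))
    rwa [hG0] at this
  rw [hfun']
  refine ⟨hmono, hlim, ?_⟩
  intro α hμIoo hα
  obtain ⟨hα0, hα1⟩ := hα
  have hc : μ + 1 / 2 < 0 := by
    have := hμIoo.2
    simp only [Set.mem_Ioo] at hμIoo
    linarith [hμIoo.2]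
  have hcy : μ + 1 / 2 < α * (μ + 1 / 2) := by nlinarith
  have hy0 : α * (μ + 1 / 2) ≤ 0 := mul_nonpos_iff.mpr (Or.inl ⟨hα0, hc.le⟩)
  -- small r with G r < target
  have hev : ∀ᶠ r in nhdsWithin 0 (Set.Ioi (0 : ℝ)), G r < α * (μ + 1 / 2) :=
    hlim.eventually_lt_const hcy
  have hmem : ∀ᶠ r in nhdsWithin 0 (Set.Ioi (0 : ℝ)), r ∈ Set.Ioi (0 : ℝ) :=
    eventually_mem_nhdsWithin
  obtain ⟨r1, hr1lt, hr1pos⟩ := (hev.and hmem).exists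
  simp only [Set.mem_Ioi] at hr1pos
  -- large r with G r > 0
  have hc1 : 0 < cc a b 1 := cc_pos ha hb 1
  set r2 : ℝ := max (r1 + 1) (4 + 4 / cc a b 1) with hr2_def
  have hr2a : 4 + 4 / cc a b 1 ≤ r2 := le_max_right _ _
  have hr2_4 : (4 : ℝ) ≤ r2 := by
    have : (0 : ℝ) < 4 / cc a b 1 := by positivity
    linarith
  have hr12 : r1 < r2 := lt_of_lt_of_le (lt_add_one r1) (le_max_left _ _)
  have hr2pos : 0 < r2 := by linarith
  set t2 : ℝ := r2 ^ 2 / 4 with ht2_def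
  have ht2r : r2 ≤ t2 := by rw [ht2_def]; nlinarith
  have ht2c : 1 ≤ cc a b 1 * t2 := by
    have h4 : 4 / cc a b 1 ≤ t2 := by linarith
    have := mul_le_mul_of_nonneg_left h4 hc1.le
    rw [mul_div_cancel₀ _ (ne_of_gt hc1)] at this
    nlinarith
  have ht2nn : (0 : ℝ) ≤ t2 := by positivity
  have hgg2 : 2 ≤ gg a b t2 := by
    have := gg_lower ha hb ht2nn
    linarith
  have hNg := NN_ge ha hb ht2nn
  have hggpos : (0 : ℝ) < gg a b t2 := by linarith
  have hratio : 1 ≤ 2 * NN a b t2 / gg a b t2 := by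
    rw [le_div_iff₀ hggpos]
    nlinarith
  have hGr2 : 0 < G r2 := by
    simp only [hG, ← ht2_def]
    have : -(1 : ℝ) / 2 < μ + 1 / 2 + 0 := by
      simp only [Set.mem_Ioo] at hμIoo
      linarith [hμIoo.1]
    nlinarith
  have hy_mem : α * (μ + 1 / 2) ∈ Set.Icc (G r1) (G r2) := ⟨hr1lt.le, le_trans hy0 hGr2.le⟩
  obtain ⟨r, hr_mem, hGr⟩ := intermediate_value_Icc hr12.le hcont.continuousOn hy_mem
  have hr0 : 0 < r := lt_of_lt_of_le hr1pos hr_mem.1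
  refine ⟨r, ⟨hr0, by rw [hfun r]; exact hGr⟩, ?_⟩
  rintro r' ⟨hr'0, hEq'⟩
  rw [hfun r'] at hEq'
  exact hmono.injOn (Set.mem_Ioi.mpr hr'0) (Set.mem_Ioi.mpr hr0) (hEq'.trans hGr.symm)
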